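/- With X counting ordered triples (v₁,v₂,v₃) of distinct vertices with pairs {v₁,v₂} and {v₁,v₃} both carrying the distinguished label in a uniform random labelling with f(N) labels: if N^{3/2}/f(N) → ∞ (and f is non-decreasing divergent), then P[X ≠ 0] → 1 as N → ∞; i.e. asymptotically almost surely the labelling is not (2,2)-free. -/

import Mathlib

open Filter Finset
open scoped Classical

/-- Defining pairs: unordered pairs of distinct vertices of `Fin N`. -/
abbrev DefPair (N : ℕ) := {p : Sym2 (Fin N) // ¬ p.IsDiag}

/-- Edge-labellings of the complete graph on `N` vertices with `M` labels;
label `0` is the distinguished label (`2`). -/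
abbrev Labelling (N M : ℕ) := DefPair N → Fin M

/-- `countX Γ` is the number of ordered triples `(v₁, v₂, v₃)` of distinct vertices such
that the pairs `{v₁,v₂}` and `{v₁,v₃}` both carry the distinguished label `0`. -/
noncomputable def countX {N M : ℕ} (Γ : Labelling N M) : ℕ :=
  (Finset.univ.filter fun t : Fin N × Fin N × Fin N =>
    t.1 ≠ t.2.1 ∧ t.1 ≠ t.2.2 ∧ t.2.1 ≠ t.2.2 ∧
    (∀ p : DefPair N, t.1 ∈ p.1 → t.2.1 ∈ p.1 → (Γ p : ℕ) = 0) ∧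
    (∀ p : DefPair N, t.1 ∈ p.1 → t.2.2 ∈ p.1 → (Γ p : ℕ) = 0)).card

set_option maxHeartbeats 1600000

namespace Aux
variable {N M : ℕ}

/-- number of labellings with prescribed zeros on `s` -/
lemma card_fix (hM : 0 < M) (s : Finset (DefPair N)) :
    (univ.filter fun Γ : Labelling N M => ∀ p ∈ s, (Γ p : ℕ) = 0).card
      = M ^ (Fintype.card (DefPair N) - s.card) := by
  have h1 : (univ.filter fun Γ : Labelling N M => ∀ p ∈ s, (Γ p : ℕ) = 0).card
      = Fintype.card {Γ : Labelling N M // ∀ p ∈ s, (Γ p : ℕ) = 0} := by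
    rw [Fintype.card_subtype]
  rw [h1]
  have e : {Γ : Labelling N M // ∀ p ∈ s, (Γ p : ℕ) = 0}
      ≃ ({p : DefPair N // p ∉ s} → Fin M) :=
  { toFun := fun Γ p => Γ.1 p.1
    invFun := fun g => ⟨fun p => if h : p ∈ s then ⟨0, hM⟩ else g ⟨p, h⟩,
      fun p hp => by simp [hp]⟩
    left_inv := fun Γ => by
      ext p
      by_cases h : p ∈ s
      · simp only [h, dif_pos]
        exact (Γ.2 p h).symm
      · simp [h]
    right_inv := fun g => by
      ext p
      simp [p.2] }
  rw [Fintype.card_congr e, Fintype.card_fun, Fintype.card_fin]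
  congr 1
  rw [Fintype.card_subtype_compl]
  congr 1
  simp [Fintype.card_subtype]


noncomputable def DT (N : ℕ) : Finset (Fin N × Fin N × Fin N) :=
  univ.filter fun t => t.1 ≠ t.2.1 ∧ t.1 ≠ t.2.2 ∧ t.2.1 ≠ t.2.2

noncomputable def ES (t : Fin N × Fin N × Fin N) : Finset (DefPair N) :=
  univ.filter fun p => (t.1 ∈ p.1 ∧ t.2.1 ∈ p.1) ∨ (t.1 ∈ p.1 ∧ t.2.2 ∈ p.1)

lemma mem_DT {t : Fin N × Fin N × Fin N} :
    t ∈ DT N ↔ t.1 ≠ t.2.1 ∧ t.1 ≠ t.2.2 ∧ t.2.1 ≠ t.2.2 := by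
  simp [DT]

lemma ES_eq {t : Fin N × Fin N × Fin N} (h1 : t.1 ≠ t.2.1) (h2 : t.1 ≠ t.2.2) :
    ES t = ({⟨s(t.1, t.2.1), by simp [h1]⟩, ⟨s(t.1, t.2.2), by simp [h2]⟩}
      : Finset (DefPair N)) := by
  ext p
  simp only [ES, mem_filter, mem_univ, true_and, mem_insert, mem_singleton,
    Subtype.ext_iff, Sym2.mem_and_mem_iff h1, Sym2.mem_and_mem_iff h2]

lemma ES_card {t : Fin N × Fin N × Fin N} (ht : t ∈ DT N) : (ES t).card = 2 := by
  obtain ⟨h1, h2, h3⟩ := mem_DT.mp ht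
  rw [ES_eq h1 h2]
  rw [card_insert_of_notMem, card_singleton]
  simp only [mem_singleton, Subtype.ext_iff]
  rw [Sym2.congr_right]
  exact h3

lemma countX_sum (Γ : Labelling N M) :
    countX Γ = ∑ t ∈ DT N, (if ∀ p ∈ ES t, (Γ p : ℕ) = 0 then 1 else 0) := by
  rw [countX, card_filter]
  rw [DT, sum_filter]
  apply sum_congr rfl
  intro t _
  by_cases hd : t.1 ≠ t.2.1 ∧ t.1 ≠ t.2.2 ∧ t.2.1 ≠ t.2.2
  · simp only [hd, if_true, hd.1, hd.2.1, hd.2.2, true_and, ne_eq, not_false_eq_true]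
    congr 1
    simp only [ES, mem_filter, mem_univ, true_and, eq_iff_iff]
    constructor
    · rintro ⟨ha, hb⟩ p (⟨h1, h2⟩ | ⟨h1, h2⟩)
      · exact ha p h1 h2
      · exact hb p h1 h2
    · intro h
      exact ⟨fun p h1 h2 => h p (Or.inl ⟨h1, h2⟩), fun p h1 h2 => h p (Or.inr ⟨h1, h2⟩)⟩
  · simp only [if_neg hd]
    rw [if_neg]
    tauto

lemma sum_countX (hM : 0 < M) :
    ∑ Γ : Labelling N M, countX Γ
      = (DT N).card * M ^ (Fintype.card (DefPair N) - 2) := by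
  have : ∀ Γ : Labelling N M, countX Γ
      = ∑ t ∈ DT N, (if ∀ p ∈ ES t, (Γ p : ℕ) = 0 then 1 else 0) := countX_sum
  simp_rw [this]
  rw [Finset.sum_comm]
  have : ∀ t ∈ DT N, (∑ Γ : Labelling N M, if ∀ p ∈ ES t, (Γ p : ℕ) = 0 then 1 else 0)
      = M ^ (Fintype.card (DefPair N) - 2) := by
    intro t ht
    rw [sum_boole, Nat.cast_id, card_fix hM, ES_card ht]
  rw [sum_congr rfl this, sum_const, smul_eq_mul]

/-- triples with the same edge set agree up to swapping the last two coordinates -/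
lemma ES_inj {a b c x y z : Fin N} (hab : a ≠ b) (hac : a ≠ c) (hbc : b ≠ c)
    (hxy : x ≠ y) (hxz : x ≠ z) (hyz : y ≠ z)
    (h : ES ((x, y, z) : Fin N × Fin N × Fin N) = ES (a, b, c)) :
    ((x, y, z) : Fin N × Fin N × Fin N) = (a, b, c) ∨
      ((x, y, z) : Fin N × Fin N × Fin N) = (a, c, b) := by
  have m1 : (⟨s(x, y), by simp [hxy]⟩ : DefPair N) ∈ ES ((x, y, z) : Fin N × Fin N × Fin N) := by
    rw [ES_eq hxy hxz]; simp
  have m2 : (⟨s(x, z), by simp [hxz]⟩ : DefPair N) ∈ ES ((x, y, z) : Fin N × Fin N × Fin N) := by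
    rw [ES_eq hxy hxz]; simp
  rw [h, ES_eq hab hac] at m1 m2
  simp only [mem_insert, mem_singleton, Subtype.mk.injEq] at m1 m2
  rcases m1 with hy | hy <;> rcases m2 with hz | hz
  · exact absurd (Sym2.congr_right.mp (hy.trans hz.symm)) hyz
  · rw [Sym2.eq_iff] at hy hz
    rcases hy with ⟨h1, h2⟩ | ⟨h1, h2⟩ <;> rcases hz with ⟨h3, h4⟩ | ⟨h3, h4⟩
    · left; simp [h1, h2, h4]
    · exact absurd (h1.symm.trans h3) hac
    · exact absurd (h3.symm.trans h1) hab
    · exact absurd (h1.symm.trans h3) hbc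
  · rw [Sym2.eq_iff] at hy hz
    rcases hy with ⟨h1, h2⟩ | ⟨h1, h2⟩ <;> rcases hz with ⟨h3, h4⟩ | ⟨h3, h4⟩
    · right; simp [h1, h2, h4]
    · exact absurd (h1.symm.trans h3) hab
    · exact absurd (h3.symm.trans h1) hac
    · exact absurd (h1.symm.trans h3) hbc.symm
  · exact absurd (Sym2.congr_right.mp (hy.trans hz.symm)) hyz

/-- triples with overlapping edge sets have constrained coordinates -/
lemma ES_overlap {a b c x y z : Fin N} (hab : a ≠ b) (hac : a ≠ c)
    (h : (ES ((x, y, z) : Fin N × Fin N × Fin N) ∩ ES (a, b, c)).Nonempty) :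
    (x = a ∨ x = b ∨ x = c) ∧
      ((y = a ∨ y = b ∨ y = c) ∨ (z = a ∨ z = b ∨ z = c)) := by
  obtain ⟨p, hp⟩ := h
  rw [mem_inter] at hp
  obtain ⟨hp1, hp2⟩ := hp
  rw [ES_eq hab hac] at hp2
  simp only [mem_insert, mem_singleton, Subtype.ext_iff] at hp2
  have hmem : ∀ u : Fin N, u ∈ p.1 → u = a ∨ u = b ∨ u = c := by
    intro u hu
    rcases hp2 with h2 | h2 <;> rw [h2] at hu <;> rw [Sym2.mem_iff] at hu <;> tauto
  simp only [ES, mem_filter, mem_univ, true_and] at hp1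
  rcases hp1 with ⟨h1, h2⟩ | ⟨h1, h2⟩
  · exact ⟨hmem _ h1, Or.inl (hmem _ h2)⟩
  · exact ⟨hmem _ h1, Or.inr (hmem _ h2)⟩

lemma DT_card_le : (DT N).card ≤ N ^ 3 := by
  calc (DT N).card ≤ (univ : Finset (Fin N × Fin N × Fin N)).card := card_filter_le _ _
    _ = N ^ 3 := by simp [card_univ]; ring

lemma DT_card_lower : N ^ 3 ≤ (DT N).card + 3 * N ^ 2 := by
  have hsplit := card_filter_add_card_filter_not
    (s := (univ : Finset (Fin N × Fin N × Fin N)))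
    (p := fun t => t.1 ≠ t.2.1 ∧ t.1 ≠ t.2.2 ∧ t.2.1 ≠ t.2.2)
  have huniv : (univ : Finset (Fin N × Fin N × Fin N)).card = N ^ 3 := by
    simp [card_univ]; ring
  have hbad : (univ.filter fun t : Fin N × Fin N × Fin N =>
      ¬(t.1 ≠ t.2.1 ∧ t.1 ≠ t.2.2 ∧ t.2.1 ≠ t.2.2)).card ≤ 3 * N ^ 2 := by
    have hsub : (univ.filter fun t : Fin N × Fin N × Fin N =>
        ¬(t.1 ≠ t.2.1 ∧ t.1 ≠ t.2.2 ∧ t.2.1 ≠ t.2.2))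
        ⊆ (univ.filter fun t : Fin N × Fin N × Fin N => t.1 = t.2.1)
          ∪ (univ.filter fun t : Fin N × Fin N × Fin N => t.1 = t.2.2)
          ∪ (univ.filter fun t : Fin N × Fin N × Fin N => t.2.1 = t.2.2) := by
      intro t ht
      simp only [mem_filter, mem_univ, true_and, mem_union] at ht ⊢
      tauto
    have c1 : (univ.filter fun t : Fin N × Fin N × Fin N => t.1 = t.2.1).card ≤ N ^ 2 := by
      have := card_le_card_of_injOn (f := fun t : Fin N × Fin N × Fin N => (t.1, t.2.2))
        (s := univ.filter fun t : Fin N × Fin N × Fin N => t.1 = t.2.1)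
        (t := (univ : Finset (Fin N × Fin N))) (by intro t _; exact mem_univ _)
        (by
          intro t ht t' ht' he
          simp only [coe_filter, Set.mem_setOf_eq, mem_univ, true_and] at ht ht'
          simp only [Prod.mk.injEq] at he
          obtain ⟨e1, e2⟩ := he
          exact Prod.ext e1 (Prod.ext (by rw [← ht, ← ht', e1]) e2))
      simpa [card_univ, sq] using this
    have c2 : (univ.filter fun t : Fin N × Fin N × Fin N => t.1 = t.2.2).card ≤ N ^ 2 := by
      have := card_le_card_of_injOn (f := fun t : Fin N × Fin N × Fin N => (t.1, t.2.1))
        (s := univ.filter fun t : Fin N × Fin N × Fin N => t.1 = t.2.2)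
        (t := (univ : Finset (Fin N × Fin N))) (by intro t _; exact mem_univ _)
        (by
          intro t ht t' ht' he
          simp only [coe_filter, Set.mem_setOf_eq, mem_univ, true_and] at ht ht'
          simp only [Prod.mk.injEq] at he
          obtain ⟨e1, e2⟩ := he
          exact Prod.ext e1 (Prod.ext e2 (by rw [← ht, ← ht', e1])))
      simpa [card_univ, sq] using this
    have c3 : (univ.filter fun t : Fin N × Fin N × Fin N => t.2.1 = t.2.2).card ≤ N ^ 2 := by
      have := card_le_card_of_injOn (f := fun t : Fin N × Fin N × Fin N => (t.1, t.2.1))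
        (s := univ.filter fun t : Fin N × Fin N × Fin N => t.2.1 = t.2.2)
        (t := (univ : Finset (Fin N × Fin N))) (by intro t _; exact mem_univ _)
        (by
          intro t ht t' ht' he
          simp only [coe_filter, Set.mem_setOf_eq, mem_univ, true_and] at ht ht'
          simp only [Prod.mk.injEq] at he
          obtain ⟨e1, e2⟩ := he
          exact Prod.ext e1 (Prod.ext e2 (by rw [← ht, ← ht', e2])))
      simpa [card_univ, sq] using this
    calc _ ≤ _ := card_le_card hsub
      _ ≤ _ := (card_union_le _ _).trans
          (Nat.add_le_add (card_union_le _ _) le_rfl)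
      _ ≤ N ^ 2 + N ^ 2 + N ^ 2 := by
          exact Nat.add_le_add (Nat.add_le_add c1 c2) c3
      _ = 3 * N ^ 2 := by ring
  have : (DT N).card + (univ.filter fun t : Fin N × Fin N × Fin N =>
      ¬(t.1 ≠ t.2.1 ∧ t.1 ≠ t.2.2 ∧ t.2.1 ≠ t.2.2)).card = N ^ 3 := by
    rw [← huniv]; exact hsplit
  omega

lemma P2_card :
    ((DT N ×ˢ DT N).filter fun q => ES q.1 = ES q.2).card ≤ 2 * (DT N).card := by
  have hsub : ((DT N ×ˢ DT N).filter fun q => ES q.1 = ES q.2)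
      ⊆ (DT N).biUnion fun t => ({t} : Finset _) ×ˢ
          ({t, (t.1, t.2.2, t.2.1)} : Finset (Fin N × Fin N × Fin N)) := by
    intro q hq
    simp only [mem_filter, mem_product] at hq
    obtain ⟨⟨h1, h2⟩, he⟩ := hq
    obtain ⟨ha1, ha2, ha3⟩ := mem_DT.mp h1
    obtain ⟨hb1, hb2, hb3⟩ := mem_DT.mp h2
    rw [mem_biUnion]
    refine ⟨q.1, h1, ?_⟩
    rw [mem_product]
    refine ⟨mem_singleton_self _, ?_⟩
    have key := ES_inj ha1 ha2 ha3 hb1 hb2 hb3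
      (a := q.1.1) (b := q.1.2.1) (c := q.1.2.2)
      (x := q.2.1) (y := q.2.2.1) (z := q.2.2.2) (by simpa using he.symm)
    simp only [mem_insert, mem_singleton]
    rcases key with hk | hk
    · left
      calc q.2 = (q.2.1, q.2.2.1, q.2.2.2) := rfl
        _ = (q.1.1, q.1.2.1, q.1.2.2) := hk
        _ = q.1 := rfl
    · right
      calc q.2 = (q.2.1, q.2.2.1, q.2.2.2) := rfl
        _ = (q.1.1, q.1.2.2, q.1.2.1) := hk
  calc _ ≤ ∑ t ∈ DT N, (({t} : Finset _) ×ˢ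
        ({t, (t.1, t.2.2, t.2.1)} : Finset (Fin N × Fin N × Fin N))).card :=
      (card_le_card hsub).trans (card_biUnion_le)
    _ ≤ ∑ _t ∈ DT N, 2 := by
        apply sum_le_sum
        intro t _
        rw [card_product, card_singleton, one_mul]
        exact (card_insert_le _ _).trans (by simp)
    _ = 2 * (DT N).card := by rw [sum_const, smul_eq_mul, Nat.mul_comm]

lemma P1_card :
    ((DT N ×ˢ DT N).filter fun q => (ES q.1 ∩ ES q.2).Nonempty).card
      ≤ (DT N).card * (18 * N) := by
  have hsub : ((DT N ×ˢ DT N).filter fun q => (ES q.1 ∩ ES q.2).Nonempty)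
      ⊆ (DT N).biUnion fun t => ({t} : Finset _) ×ˢ
          (({t.1, t.2.1, t.2.2} : Finset (Fin N)) ×ˢ
            ((({t.1, t.2.1, t.2.2} : Finset (Fin N)) ×ˢ (univ : Finset (Fin N)))
              ∪ ((univ : Finset (Fin N)) ×ˢ ({t.1, t.2.1, t.2.2} : Finset (Fin N))))) := by
    intro q hq
    simp only [mem_filter, mem_product] at hq
    obtain ⟨⟨h1, h2⟩, he⟩ := hq
    obtain ⟨ha1, ha2, _⟩ := mem_DT.mp h1
    rw [mem_biUnion]
    refine ⟨q.1, h1, ?_⟩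
    have he' : (ES ((q.2.1, q.2.2.1, q.2.2.2) : Fin N × Fin N × Fin N)
        ∩ ES (q.1.1, q.1.2.1, q.1.2.2)).Nonempty := by
      have : ES q.2 ∩ ES q.1 = ES q.1 ∩ ES q.2 := inter_comm _ _
      simpa [this] using he
    have key := ES_overlap ha1 ha2 he'
    simp only [mem_product, mem_singleton, mem_union, mem_insert, mem_univ, and_true,
      true_and]
    exact ⟨key.1, key.2⟩
  calc _ ≤ ∑ t ∈ DT N, (({t} : Finset _) ×ˢ
        (({t.1, t.2.1, t.2.2} : Finset (Fin N)) ×ˢ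
          ((({t.1, t.2.1, t.2.2} : Finset (Fin N)) ×ˢ (univ : Finset (Fin N)))
            ∪ ((univ : Finset (Fin N)) ×ˢ ({t.1, t.2.1, t.2.2} : Finset (Fin N)))))).card :=
      (card_le_card hsub).trans (card_biUnion_le)
    _ ≤ ∑ _t ∈ DT N, 18 * N := by
        apply sum_le_sum
        intro t _
        rw [card_product, card_singleton, one_mul, card_product]
        have h3 : ({t.1, t.2.1, t.2.2} : Finset (Fin N)).card ≤ 3 :=
          (card_insert_le _ _).trans (by have := card_insert_le t.2.1 ({t.2.2} : Finset (Fin N)); simp at this; omega)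
        have hu : ((({t.1, t.2.1, t.2.2} : Finset (Fin N)) ×ˢ (univ : Finset (Fin N)))
            ∪ ((univ : Finset (Fin N)) ×ˢ ({t.1, t.2.1, t.2.2} : Finset (Fin N)))).card
            ≤ 6 * N := by
          calc _ ≤ _ := card_union_le _ _
            _ ≤ 3 * N + N * 3 := by
                rw [card_product, card_product, card_univ, Fintype.card_fin]
                exact Nat.add_le_add (Nat.mul_le_mul_right _ h3) (Nat.mul_le_mul_left _ h3)
            _ = 6 * N := by ring
        calc _ ≤ 3 * (6 * N) := Nat.mul_le_mul h3 hu
          _ = 18 * N := by ring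
    _ = (DT N).card * (18 * N) := by rw [sum_const, smul_eq_mul]

lemma sum_countX_sq_le (hM : 1 ≤ M) (hE : 4 ≤ Fintype.card (DefPair N)) :
    ∑ Γ : Labelling N M, (countX Γ) ^ 2
      ≤ M ^ (Fintype.card (DefPair N) - 4)
        * ((DT N).card ^ 2 + 18 * N ^ 4 * M + 2 * (DT N).card * M ^ 2) := by
  set E := Fintype.card (DefPair N) with hEdef
  have step1 : ∑ Γ : Labelling N M, (countX Γ) ^ 2
      = ∑ q ∈ DT N ×ˢ DT N, M ^ (E - (ES q.1 ∪ ES q.2).card) := by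
    have h1 : ∀ Γ : Labelling N M, (countX Γ) ^ 2
        = ∑ q ∈ DT N ×ˢ DT N,
            if ∀ p ∈ ES q.1 ∪ ES q.2, (Γ p : ℕ) = 0 then 1 else 0 := by
      intro Γ
      rw [sq, countX_sum, Finset.sum_mul_sum]
      rw [← sum_product' (DT N) (DT N)]
      apply sum_congr rfl
      intro q _
      have hiff : (∀ p ∈ ES q.1 ∪ ES q.2, (Γ p : ℕ) = 0) ↔
          ((∀ p ∈ ES q.1, (Γ p : ℕ) = 0) ∧ ∀ p ∈ ES q.2, (Γ p : ℕ) = 0) :=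
        Finset.forall_mem_union
      rw [if_congr hiff rfl rfl, ite_and, ite_mul, one_mul, zero_mul]
    simp_rw [h1]
    rw [Finset.sum_comm]
    apply sum_congr rfl
    intro q _
    rw [sum_boole, Nat.cast_id, card_fix (by omega)]
  rw [step1]
  have hM0 : 0 < M := hM
  have step2 : ∀ q ∈ DT N ×ˢ DT N,
      M ^ (E - (ES q.1 ∪ ES q.2).card)
        ≤ M ^ (E - 4) * (1 + (if (ES q.1 ∩ ES q.2).Nonempty then M else 0)
            + (if ES q.1 = ES q.2 then M ^ 2 else 0)) := by
    intro q hq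
    rw [mem_product] at hq
    have hc1 : (ES q.1).card = 2 := ES_card hq.1
    have hc2 : (ES q.2).card = 2 := ES_card hq.2
    have hck : (ES q.1 ∪ ES q.2).card + (ES q.1 ∩ ES q.2).card = 4 := by
      rw [card_union_add_card_inter, hc1, hc2]
    set k := (ES q.1 ∩ ES q.2).card with hk
    have hexp : E - (ES q.1 ∪ ES q.2).card = (E - 4) + k := by omega
    rw [hexp, pow_add]
    apply Nat.mul_le_mul_left
    by_cases heq : ES q.1 = ES q.2
    · have : k = 2 := by rw [hk, heq, inter_self, hc2]
      rw [this, if_pos heq]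
      have : (ES q.1 ∩ ES q.2).Nonempty := by
        rw [← card_pos]; omega
      rw [if_pos this]; omega
    · by_cases hne : (ES q.1 ∩ ES q.2).Nonempty
      · have hk1 : k ≤ 1 := by
          by_contra hgt
          push_neg at hgt
          have hk2 : k = 2 := by
            have := (card_le_card (inter_subset_left : ES q.1 ∩ ES q.2 ⊆ ES q.1))
            omega
          have e1 : ES q.1 ∩ ES q.2 = ES q.1 :=
            eq_of_subset_of_card_le inter_subset_left (by omega)
          have e2 : ES q.1 ∩ ES q.2 = ES q.2 :=
            eq_of_subset_of_card_le inter_subset_right (by omega)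
          exact heq (e1.symm.trans e2)
        rw [if_pos hne, if_neg heq]
        calc M ^ k ≤ M ^ 1 := Nat.pow_le_pow_right hM0 hk1
          _ = M := pow_one M
          _ ≤ 1 + M + 0 := by omega
      · have : k = 0 := by
          rw [hk, not_nonempty_iff_eq_empty.mp hne, card_empty]
        rw [this, pow_zero, if_neg heq, if_neg hne]
        omega
  calc _ ≤ ∑ q ∈ DT N ×ˢ DT N,
        M ^ (E - 4) * (1 + (if (ES q.1 ∩ ES q.2).Nonempty then M else 0)
          + (if ES q.1 = ES q.2 then M ^ 2 else 0)) := sum_le_sum step2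
    _ = M ^ (E - 4) * ((DT N ×ˢ DT N).card
        + ((DT N ×ˢ DT N).filter fun q => (ES q.1 ∩ ES q.2).Nonempty).card * M
        + ((DT N ×ˢ DT N).filter fun q => ES q.1 = ES q.2).card * M ^ 2) := by
      rw [← mul_sum]
      congr 1
      rw [sum_add_distrib, sum_add_distrib, sum_const, smul_eq_mul, mul_one]
      congr 1
      · congr 1
        rw [← sum_filter, sum_const, smul_eq_mul]
      · rw [← sum_filter, sum_const, smul_eq_mul]
    _ ≤ M ^ (E - 4) * ((DT N).card ^ 2 + 18 * N ^ 4 * M + 2 * (DT N).card * M ^ 2) := by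
      apply Nat.mul_le_mul_left
      have hp : (DT N ×ˢ DT N).card = (DT N).card ^ 2 := by rw [card_product, sq]
      have h1 : ((DT N ×ˢ DT N).filter fun q => (ES q.1 ∩ ES q.2).Nonempty).card * M
          ≤ 18 * N ^ 4 * M := by
        apply Nat.mul_le_mul_right
        calc _ ≤ (DT N).card * (18 * N) := P1_card
          _ ≤ N ^ 3 * (18 * N) := Nat.mul_le_mul_right _ DT_card_le
          _ = 18 * N ^ 4 := by ring
      have h2 : ((DT N ×ˢ DT N).filter fun q => ES q.1 = ES q.2).card * M ^ 2
          ≤ 2 * (DT N).card * M ^ 2 := Nat.mul_le_mul_right _ P2_card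
      omega

lemma E_ge4 (hN : 6 ≤ N) : 4 ≤ Fintype.card (DefPair N) := by
  have h : Fintype.card (DefPair N) = N.choose 2 := by
    rw [Sym2.card_subtype_not_diag, Fintype.card_fin]
  rw [h]
  have := Nat.choose_le_choose 2 hN
  have h6 : (6:ℕ).choose 2 = 15 := by decide
  omega

lemma card_labelling : Fintype.card (Labelling N M) = M ^ Fintype.card (DefPair N) := by
  rw [Fintype.card_fun, Fintype.card_fin]

lemma cauchy_schwarz :
    (∑ Γ : Labelling N M, (countX Γ : ℝ)) ^ 2
      ≤ ((univ.filter fun Γ : Labelling N M => countX Γ ≠ 0).card : ℝ)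
        * ∑ Γ : Labelling N M, (countX Γ : ℝ) ^ 2 := by
  set s := univ.filter fun Γ : Labelling N M => countX Γ ≠ 0 with hs
  have h1 : ∑ Γ : Labelling N M, (countX Γ : ℝ) = ∑ Γ ∈ s, (countX Γ : ℝ) := by
    refine (Finset.sum_subset (filter_subset _ _) ?_).symm
    intro x _ hx
    simp only [hs, mem_filter, mem_univ, true_and, Ne, not_not] at hx
    simp [hx]
  have h2 := sum_mul_sq_le_sq_mul_sq s (fun _ => (1:ℝ)) (fun Γ => (countX Γ : ℝ))
  simp only [one_mul, one_pow, sum_const, smul_eq_mul, mul_one, nsmul_eq_mul] at h2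
  rw [h1]
  calc (∑ Γ ∈ s, (countX Γ : ℝ)) ^ 2 ≤ (s.card : ℝ) * ∑ Γ ∈ s, (countX Γ : ℝ) ^ 2 := h2
    _ ≤ (s.card : ℝ) * ∑ Γ : Labelling N M, (countX Γ : ℝ) ^ 2 := by
        apply mul_le_mul_of_nonneg_left _ (Nat.cast_nonneg _)
        apply sum_le_sum_of_subset_of_nonneg (subset_univ _)
        intro i _ _
        positivity

/-- The per-`N` lower bound on the success probability. -/
lemma ratio_lower (hN : 6 ≤ N) (hM : 1 ≤ M) :
    1 - (72 * (M : ℝ) / (N : ℝ) ^ 2 + 4 * (M : ℝ) ^ 2 / (N : ℝ) ^ 3)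
      ≤ ((univ.filter fun Γ : Labelling N M => countX Γ ≠ 0).card : ℝ)
        / (Fintype.card (Labelling N M) : ℝ) := by
  set E := Fintype.card (DefPair N) with hEdef
  have hE : 4 ≤ E := E_ge4 hN
  set Dc := (DT N).card with hDc
  set A := (univ.filter fun Γ : Labelling N M => countX Γ ≠ 0).card with hA
  have hMR : (1:ℝ) ≤ (M:ℝ) := by exact_mod_cast hM
  have hNR : (6:ℝ) ≤ (N:ℝ) := by exact_mod_cast hN
  have hN0 : (0:ℝ) < (N:ℝ) := by linarith
  have hM0 : (0:ℝ) < (M:ℝ) := by linarith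
  -- first moment, real form
  have hS1 : ∑ Γ : Labelling N M, (countX Γ : ℝ) = (Dc : ℝ) * (M:ℝ) ^ (E - 2) := by
    rw [← Nat.cast_sum, sum_countX (by omega), Nat.cast_mul, Nat.cast_pow]
  -- second moment, real form
  set Bn : ℝ := (Dc:ℝ)^2 + 18 * (N:ℝ)^4 * M + 2 * (Dc:ℝ) * (M:ℝ)^2 with hBn
  have hS2 : ∑ Γ : Labelling N M, (countX Γ : ℝ) ^ 2 ≤ (M:ℝ) ^ (E - 4) * Bn := by
    have := sum_countX_sq_le (N := N) hM hE
    calc ∑ Γ : Labelling N M, (countX Γ : ℝ) ^ 2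
        = ((∑ Γ : Labelling N M, (countX Γ) ^ 2 : ℕ) : ℝ) := by
          rw [Nat.cast_sum]
          exact sum_congr rfl fun Γ _ => by rw [Nat.cast_pow]
      _ ≤ ((M ^ (E - 4) * (Dc ^ 2 + 18 * N ^ 4 * M + 2 * Dc * M ^ 2) : ℕ) : ℝ) := by
          exact_mod_cast this
      _ = (M:ℝ) ^ (E - 4) * Bn := by rw [hBn]; push_cast; ring
  -- Cauchy–Schwarz
  have hCS := cauchy_schwarz (N := N) (M := M)
  rw [hS1] at hCS
  have hpow4 : (0:ℝ) < (M:ℝ) ^ (E - 4) := pow_pos hM0 _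
  have hkey : (Dc:ℝ)^2 * (M:ℝ)^E ≤ (A:ℝ) * Bn := by
    have h1 : ((Dc : ℝ) * (M:ℝ) ^ (E - 2)) ^ 2 = (Dc:ℝ)^2 * ((M:ℝ)^E * (M:ℝ)^(E-4)) := by
      rw [mul_pow, ← pow_mul]
      congr 2
      rw [← pow_add]
      congr 1
      omega
    have h2 : (A:ℝ) * ((M:ℝ) ^ (E - 4) * Bn) = ((A:ℝ) * Bn) * (M:ℝ)^(E-4) := by ring
    have h3 : (Dc:ℝ)^2 * (M:ℝ)^E * (M:ℝ)^(E-4) ≤ ((A:ℝ) * Bn) * (M:ℝ)^(E-4) := by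
      calc (Dc:ℝ)^2 * (M:ℝ)^E * (M:ℝ)^(E-4)
          = ((Dc : ℝ) * (M:ℝ) ^ (E - 2)) ^ 2 := by rw [h1]; ring
        _ ≤ (A:ℝ) * ∑ Γ : Labelling N M, (countX Γ : ℝ) ^ 2 := hCS
        _ ≤ (A:ℝ) * ((M:ℝ) ^ (E - 4) * Bn) :=
            mul_le_mul_of_nonneg_left hS2 (Nat.cast_nonneg _)
        _ = ((A:ℝ) * Bn) * (M:ℝ)^(E-4) := h2
    exact le_of_mul_le_mul_right h3 hpow4
  -- lower bound on Dc
  have hDlo : (N:ℝ)^3 ≤ 2 * (Dc:ℝ) := by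
    have h1 : N ^ 3 ≤ Dc + 3 * N ^ 2 := DT_card_lower
    have h2 : 6 * N ^ 2 ≤ N ^ 3 := by
      have : N ^ 2 * 6 ≤ N ^ 2 * N := Nat.mul_le_mul_left _ hN
      calc 6 * N ^ 2 = N ^ 2 * 6 := by ring
        _ ≤ N ^ 2 * N := this
        _ = N ^ 3 := by ring
    have : N ^ 3 ≤ 2 * Dc := by omega
    exact_mod_cast this
  have hDc0 : (0:ℝ) ≤ (Dc:ℝ) := Nat.cast_nonneg _
  have hDcpos : (0:ℝ) < (Dc:ℝ) := by nlinarith [pow_pos hN0 3]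
  have hBnpos : (0:ℝ) < Bn := by positivity
  -- the error term
  set eps : ℝ := 72 * (M : ℝ) / (N : ℝ) ^ 2 + 4 * (M : ℝ) ^ 2 / (N : ℝ) ^ 3 with heps
  have heps0 : 0 ≤ eps := by positivity
  -- core: Bn - Dc² ≤ eps * Dc²
  have hcore : 18 * (N:ℝ)^4 * M + 2 * (Dc:ℝ) * (M:ℝ)^2 ≤ eps * (Dc:ℝ)^2 := by
    have e1 : 18 * (N:ℝ)^4 * M ≤ 72 * (M : ℝ) / (N : ℝ) ^ 2 * (Dc:ℝ)^2 := by
      rw [div_mul_eq_mul_div, le_div_iff₀ (by positivity)]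
      nlinarith [mul_le_mul_of_nonneg_left
        (mul_self_le_mul_self (by positivity : (0:ℝ) ≤ (N:ℝ)^3) hDlo)
        (by positivity : (0:ℝ) ≤ 18 * (M:ℝ))]
    have e2 : 2 * (Dc:ℝ) * (M:ℝ)^2 ≤ 4 * (M : ℝ) ^ 2 / (N : ℝ) ^ 3 * (Dc:ℝ)^2 := by
      rw [div_mul_eq_mul_div, le_div_iff₀ (by positivity)]
      nlinarith [mul_le_mul_of_nonneg_left hDlo
        (by positivity : (0:ℝ) ≤ 2 * (Dc:ℝ) * (M:ℝ)^2)]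
    calc 18 * (N:ℝ)^4 * M + 2 * (Dc:ℝ) * (M:ℝ)^2
        ≤ 72 * (M : ℝ) / (N : ℝ) ^ 2 * (Dc:ℝ)^2 + 4 * (M : ℝ) ^ 2 / (N : ℝ) ^ 3 * (Dc:ℝ)^2 :=
          add_le_add e1 e2
      _ = eps * (Dc:ℝ)^2 := by rw [heps]; ring
  have hfrac : 1 - eps ≤ (Dc:ℝ)^2 / Bn := by
    rw [le_div_iff₀ hBnpos]
    have h1 : eps * (Dc:ℝ)^2 ≤ eps * Bn := by
      apply mul_le_mul_of_nonneg_left _ heps0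
      rw [hBn]
      have p1 : (0:ℝ) ≤ 18 * (N:ℝ)^4 * (M:ℝ) := by positivity
      have p2 : (0:ℝ) ≤ 2 * (Dc:ℝ) * (M:ℝ)^2 := by positivity
      linarith
    nlinarith
  -- conclude
  have hT : (Fintype.card (Labelling N M) : ℝ) = (M:ℝ)^E := by
    rw [card_labelling, Nat.cast_pow]
  have hTpos : (0:ℝ) < (Fintype.card (Labelling N M) : ℝ) := by
    rw [hT]; positivity
  rw [le_div_iff₀ hTpos, hT]
  calc (1 - eps) * (M:ℝ)^E ≤ (Dc:ℝ)^2 / Bn * (M:ℝ)^E :=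
      mul_le_mul_of_nonneg_right hfrac (by positivity)
    _ = (Dc:ℝ)^2 * (M:ℝ)^E / Bn := by ring
    _ ≤ (A:ℝ) := by
        rw [div_le_iff₀ hBnpos]
        exact hkey

end Aux

/-- If `f` is non-decreasing, divergent, and `N^{3/2}/f(N) → ∞`, then `P[X ≠ 0] → 1`:
asymptotically almost surely the random labelling is not (2,2)-free. -/
theorem prob_X_ne_zero_tendsto_one (f : ℕ → ℕ) (hmono : Monotone f)
    (hdiv : Tendsto f atTop atTop)
    (hf : Tendsto (fun N : ℕ => (N : ℝ) ^ ((3 : ℝ) / 2) / (f N : ℝ)) atTop atTop) :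
    Tendsto (fun N =>
        ((Finset.univ.filter fun Γ : Labelling N (f N) => countX Γ ≠ 0).card : ℝ) /
          (Fintype.card (Labelling N (f N)) : ℝ)) atTop (nhds 1) := by
  -- the normalized label count tends to 0
  have h0 : Tendsto (fun N : ℕ => (f N : ℝ) / (N : ℝ) ^ ((3 : ℝ) / 2)) atTop (nhds 0) := by
    have := hf.inv_tendsto_atTop
    have heq : (fun N : ℕ => (N : ℝ) ^ ((3 : ℝ) / 2) / (f N : ℝ))⁻¹
        = fun N : ℕ => (f N : ℝ) / (N : ℝ) ^ ((3 : ℝ) / 2) := by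
      funext N
      simp [Pi.inv_apply, inv_div]
    rwa [heq] at this
  -- term 1 : 72 f N / N² → 0
  have hterm1 : Tendsto (fun N : ℕ => 72 * (f N : ℝ) / (N : ℝ) ^ 2) atTop (nhds 0) := by
    have hupper : Tendsto (fun N : ℕ => 72 * ((f N : ℝ) / (N : ℝ) ^ ((3 : ℝ) / 2)))
        atTop (nhds 0) := by
      have := h0.const_mul (72 : ℝ)
      simpa using this
    apply tendsto_of_tendsto_of_tendsto_of_le_of_le' tendsto_const_nhds hupper
    · filter_upwards [eventually_ge_atTop 1] with N hN
      positivity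
    · filter_upwards [eventually_ge_atTop 1] with N hN
      have hN1 : (1:ℝ) ≤ (N:ℝ) := by exact_mod_cast hN
      have hle : (N:ℝ) ^ ((3 : ℝ) / 2) ≤ (N:ℝ) ^ 2 := by
        rw [show ((N:ℝ) ^ 2) = (N:ℝ) ^ ((2:ℕ):ℝ) from (Real.rpow_natCast _ 2).symm]
        apply Real.rpow_le_rpow_of_exponent_le hN1
        norm_num
      have hpos : (0:ℝ) < (N:ℝ) ^ ((3 : ℝ) / 2) := Real.rpow_pos_of_pos (by linarith) _
      rw [mul_div_assoc]
      apply mul_le_mul_of_nonneg_left _ (by norm_num : (0:ℝ) ≤ 72)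
      exact div_le_div_of_nonneg_left (Nat.cast_nonneg _) hpos hle
  -- term 2 : 4 (f N)² / N³ → 0
  have hterm2 : Tendsto (fun N : ℕ => 4 * (f N : ℝ) ^ 2 / (N : ℝ) ^ 3) atTop (nhds 0) := by
    have hsq : Tendsto (fun N : ℕ => 4 * ((f N : ℝ) / (N : ℝ) ^ ((3 : ℝ) / 2)) ^ 2)
        atTop (nhds 0) := by
      have h1 : Tendsto (fun N : ℕ => ((f N : ℝ) / (N : ℝ) ^ ((3 : ℝ) / 2)) ^ 2)
          atTop (nhds 0) := by
        have := h0.mul h0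
        simpa [sq] using this
      have := h1.const_mul (4 : ℝ)
      simpa using this
    apply hsq.congr'
    filter_upwards [eventually_ge_atTop 1] with N hN
    have hN0 : (0:ℝ) < (N:ℝ) := by exact_mod_cast Nat.lt_of_lt_of_le Nat.zero_lt_one hN
    have hNpow : ((N:ℝ) ^ ((3 : ℝ) / 2)) ^ 2 = (N:ℝ) ^ 3 := by
      rw [← Real.rpow_natCast ((N:ℝ) ^ ((3 : ℝ) / 2)) 2, ← Real.rpow_mul hN0.le]
      norm_num
    rw [div_pow, hNpow]
    ring
  have heps : Tendsto (fun N : ℕ =>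
      1 - (72 * (f N : ℝ) / (N : ℝ) ^ 2 + 4 * (f N : ℝ) ^ 2 / (N : ℝ) ^ 3))
      atTop (nhds 1) := by
    have := (hterm1.add hterm2).const_sub (1:ℝ)
    simpa using this
  -- eventual bounds
  have hev1 : ∀ᶠ N : ℕ in atTop, 1 ≤ f N := hdiv.eventually_ge_atTop 1
  apply tendsto_of_tendsto_of_tendsto_of_le_of_le' heps tendsto_const_nhds
  · filter_upwards [eventually_ge_atTop 6, hev1] with N hN hfN
    exact Aux.ratio_lower hN hfN
  · filter_upwards [eventually_ge_atTop 6, hev1] with N hN hfN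
    have hT : (0:ℝ) < (Fintype.card (Labelling N (f N)) : ℝ) := by
      rw [Aux.card_labelling]
      have : 0 < f N ^ Fintype.card (DefPair N) := Nat.pow_pos (by omega)
      exact_mod_cast this
    rw [div_le_one hT]
    exact_mod_cast Nat.cast_le.mpr (card_filter_le _ _)
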